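/- Let u and t be positive integers with u − 1 ≤ ⌈(t−1)/2⌉. Then sba(u,t), the maximum size of an antichain in DBV(u,t), is at least the binomial coefficient C(t−1, u−1); indeed, the bit vectors (1, x_2, …, x_t) with exactly u−1 zero entries all belong to DBV(u,t) and form an antichain of that size. -/
import Mathlib


/-- The *airiness* of a bit vector `x : Fin t → Bool`: the largest number `u` such that
`x` has `u` consecutive `false` (i.e. zero) entries. -/
noncomputable def air {t : ℕ} (x : Fin t → Bool) : ℕ :=
  sSup {u : ℕ | ∃ j : ℕ, j + u ≤ t ∧ ∀ i : Fin t, j ≤ i.val → i.val < j + u → x i = false}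

/-- `DBV u t`: the set of bit vectors of dimension `t` whose first coordinate is `1`
(`true`) and whose airiness is strictly less than `u`, ordered componentwise. -/
def DBV (u t : ℕ) : Set (Fin t → Bool) :=
  {x | (∀ i : Fin t, i.val = 0 → x i = true) ∧ air x < u}

/-- `sba u t`: the maximum size of an antichain in `DBV u t`. -/
noncomputable def sba (u t : ℕ) : ℕ :=
  sSup {n : ℕ | ∃ X : Finset (Fin t → Bool),
    ↑X ⊆ DBV u t ∧ IsAntichain (· ≤ ·) (X : Set (Fin t → Bool)) ∧ X.card = n}

/-- For positive integers `u` and `t` with `u - 1 ≤ ⌈(t-1)/2⌉` (the ceiling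
`⌈(t-1)/2⌉` is `(t - 1 + 1) / 2` in natural-number arithmetic), the maximum antichain
size `sba u t` in `DBV u t` is at least the binomial coefficient `C(t - 1, u - 1)`;
indeed, the set of bit vectors with first coordinate `1` (`true`) and exactly `u - 1`
zero (`false`) entries is contained in `DBV u t`, is an antichain, and has exactly
`C(t - 1, u - 1)` elements. -/
theorem sba_ge_choose (u t : ℕ) (hu : 0 < u) (ht : 0 < t)
    (h : u - 1 ≤ (t - 1 + 1) / 2) :
    Nat.choose (t - 1) (u - 1) ≤ sba u t ∧
    ∀ X : Set (Fin t → Bool),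
      X = {x | (∀ i : Fin t, i.val = 0 → x i = true) ∧
               (Finset.univ.filter fun i : Fin t => x i = false).card = u - 1} →
      X ⊆ DBV u t ∧ IsAntichain (· ≤ ·) X ∧ X.ncard = Nat.choose (t - 1) (u - 1) := by
  haveI : NeZero t := ⟨ht.ne'⟩
  classical
  set F : Finset (Fin t → Bool) := Finset.univ.filter (fun x =>
      (∀ i : Fin t, i.val = 0 → x i = true) ∧
      (Finset.univ.filter fun i : Fin t => x i = false).card = u - 1) with hF
  have hFcoe : (↑F : Set (Fin t → Bool)) =
      {x | (∀ i : Fin t, i.val = 0 → x i = true) ∧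
           (Finset.univ.filter fun i : Fin t => x i = false).card = u - 1} := by
    ext x; simp [hF]
  -- F is contained in DBV u t
  have hsub : (↑F : Set (Fin t → Bool)) ⊆ DBV u t := by
    intro x hx
    rw [hFcoe] at hx
    obtain ⟨h1, h2⟩ := hx
    refine ⟨h1, ?_⟩
    have hbdd : ∀ v ∈ {v : ℕ | ∃ j : ℕ, j + v ≤ t ∧
        ∀ i : Fin t, j ≤ i.val → i.val < j + v → x i = false}, v < u := by
      rintro v ⟨j, hjv, hall⟩
      have hsubT : (Finset.univ.filter fun i : Fin t => j ≤ i.val ∧ i.val < j + v) ⊆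
          (Finset.univ.filter fun i : Fin t => x i = false) := by
        intro i hi
        simp only [Finset.mem_filter, Finset.mem_univ, true_and] at hi ⊢
        exact hall i hi.1 hi.2
      have hcardT : (Finset.univ.filter fun i : Fin t => j ≤ i.val ∧ i.val < j + v).card = v := by
        have hbijT : (Finset.univ.filter fun i : Fin t => j ≤ i.val ∧ i.val < j + v).card =
            (Finset.Ico j (j+v)).card := by
          apply Finset.card_bij (fun i _ => i.val)
          · intro a ha
            simp only [Finset.mem_filter, Finset.mem_univ, true_and] at ha
            simp [Finset.mem_Ico, ha.1, ha.2]
          · intro a _ b _ hab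
            exact Fin.val_injective hab
          · intro b hb
            simp only [Finset.mem_Ico] at hb
            refine ⟨⟨b, by omega⟩, ?_, rfl⟩
            simp only [Finset.mem_filter, Finset.mem_univ, true_and]
            exact ⟨hb.1, hb.2⟩
        rw [hbijT, Nat.card_Ico]
        omega
      have hle := Finset.card_le_card hsubT
      rw [hcardT, h2] at hle
      omega
    have hne : ({v : ℕ | ∃ j : ℕ, j + v ≤ t ∧
        ∀ i : Fin t, j ≤ i.val → i.val < j + v → x i = false}).Nonempty :=
      ⟨0, 0, by omega, fun i h1 h2 => absurd h2 (by omega)⟩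
    have : air x ≤ u - 1 := csSup_le hne (fun b hb => by have := hbdd b hb; omega)
    omega
  -- F is an antichain
  have hanti : IsAntichain (· ≤ ·) (↑F : Set (Fin t → Bool)) := by
    intro x hx y hy hne hle
    rw [hFcoe] at hx hy
    apply hne
    have hsub2 : (Finset.univ.filter fun i : Fin t => y i = false) ⊆
        (Finset.univ.filter fun i : Fin t => x i = false) := by
      intro i hi
      simp only [Finset.mem_filter, Finset.mem_univ, true_and] at hi ⊢
      have hxy := hle i
      rw [hi] at hxy
      revert hxy; cases x i <;> simp
    have heq : (Finset.univ.filter fun i : Fin t => y i = false) =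
        (Finset.univ.filter fun i : Fin t => x i = false) :=
      Finset.eq_of_subset_of_card_le hsub2 (by rw [hx.2, hy.2])
    funext i
    have hiff := Finset.ext_iff.mp heq i
    simp only [Finset.mem_filter, Finset.mem_univ, true_and] at hiff
    cases hxi : x i <;> cases hyi : y i <;> simp_all
  -- cardinality of F
  have hcard : F.card = Nat.choose (t - 1) (u - 1) := by
    have hbij : F.card = (((Finset.univ : Finset (Fin t)).erase 0).powersetCard (u-1)).card := by
      apply Finset.card_bij (fun x _ => Finset.univ.filter fun i : Fin t => x i = false)
      · intro x hx
        simp only [hF, Finset.mem_filter, Finset.mem_univ, true_and] at hx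
        rw [Finset.mem_powersetCard]
        refine ⟨?_, hx.2⟩
        intro i hi
        simp only [Finset.mem_filter, Finset.mem_univ, true_and] at hi
        rw [Finset.mem_erase]
        refine ⟨?_, Finset.mem_univ i⟩
        intro h0
        have := hx.1 i (by simp [h0])
        simp [this] at hi
      · intro x hx y hy hxy
        funext i
        have hiff : (i ∈ Finset.univ.filter fun i : Fin t => x i = false) ↔
            (i ∈ Finset.univ.filter fun i : Fin t => y i = false) := by rw [hxy]
        simp only [Finset.mem_filter, Finset.mem_univ, true_and] at hiff
        cases hxi : x i <;> cases hyi : y i <;> simp_all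
      · intro S hS
        rw [Finset.mem_powersetCard] at hS
        have h0S : (0 : Fin t) ∉ S := by
          intro h0
          exact (Finset.mem_erase.mp (hS.1 h0)).1 rfl
        have hfilter : (Finset.univ.filter fun i : Fin t => (decide (i ∉ S)) = false) = S := by
          ext i
          simp [decide_eq_false_iff_not]
        refine ⟨fun i => decide (i ∉ S), ?_, hfilter⟩
        simp only [hF, Finset.mem_filter, Finset.mem_univ, true_and]
        constructor
        · intro i hi
          have hi0 : i = 0 := Fin.ext (by simp [hi])
          rw [hi0]
          simp [h0S]
        · rw [hfilter, hS.2]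
    rw [hbij, Finset.card_powersetCard, Finset.card_erase_of_mem (Finset.mem_univ 0),
      Finset.card_univ, Fintype.card_fin]
  refine ⟨?_, ?_⟩
  · apply le_csSup
    · refine ⟨Fintype.card (Fin t → Bool), ?_⟩
      rintro n ⟨X, -, -, rfl⟩
      exact le_trans X.card_le_univ (le_of_eq Finset.card_univ)
    · exact ⟨F, hsub, hanti, hcard⟩
  · intro X hX
    rw [hX, ← hFcoe]
    exact ⟨hsub, hanti, by rw [Set.ncard_coe_finset, hcard]⟩
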